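/- The function q ↦ ∫ tanh²(z√(β² q)) dμ(z) on [0,1] (with μ standard Gaussian, β ∈ ℝ) is continuous, nondecreasing, maps [0,1] into [0,1), equals 0 at q=0, and is differentiable on (0,1] with derivative at 0⁺ equal to β² (i.e. lim_{q→0⁺} q^{-1} ∫ tanh²(z√(β² q)) dμ(z) = β²). -/

import Mathlib

open MeasureTheory ProbabilityTheory Filter Real

lemma myContinuousTanh : Continuous Real.tanh := by
  have : Real.tanh = fun x => Real.sinh x / Real.cosh x := funext Real.tanh_eq_sinh_div_cosh
  rw [this]
  exact Real.continuous_sinh.div Real.continuous_cosh (fun x => (Real.cosh_pos x).ne')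

lemma myHasDerivAtTanh (x : ℝ) : HasDerivAt Real.tanh (1 - Real.tanh x ^ 2) x := by
  have hc : Real.cosh x ≠ 0 := (Real.cosh_pos x).ne'
  have h := (Real.hasDerivAt_sinh x).div (Real.hasDerivAt_cosh x) hc
  have he : Real.tanh = fun y => Real.sinh y / Real.cosh y := funext Real.tanh_eq_sinh_div_cosh
  rw [he]
  exact h.congr_deriv (by beta_reduce; field_simp)

lemma myTanhSqLtOne (x : ℝ) : Real.tanh x ^ 2 < 1 := by
  rw [Real.tanh_eq_sinh_div_cosh, div_pow, div_lt_one (by positivity)]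
  nlinarith [Real.cosh_sq_sub_sinh_sq x]

lemma myTanhStrictMono : StrictMono Real.tanh :=
  strictMono_of_deriv_pos (fun x => by
    rw [(myHasDerivAtTanh x).deriv]; nlinarith [myTanhSqLtOne x])

lemma myTanhNonneg {x : ℝ} (hx : 0 ≤ x) : 0 ≤ Real.tanh x := by
  simpa [Real.tanh_zero] using myTanhStrictMono.monotone hx

lemma myTanhLeSelf {x : ℝ} (hx : 0 ≤ x) : Real.tanh x ≤ x := by
  have hmono : Monotone (fun y => y - Real.tanh y) := by
    apply monotone_of_deriv_nonneg
    · exact fun y => (differentiable_id.sub fun y => (myHasDerivAtTanh y).differentiableAt) y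
    · intro y
      have h : HasDerivAt (fun y => y - Real.tanh y) (1 - (1 - Real.tanh y ^ 2)) y :=
        (hasDerivAt_id y).sub (myHasDerivAtTanh y)
      rw [h.deriv]
      nlinarith [sq_nonneg (Real.tanh y)]
  have := hmono hx
  simpa [Real.tanh_zero] using this

lemma myAbsTanh (x : ℝ) : |Real.tanh x| = Real.tanh |x| := by
  rcases le_or_gt 0 x with h | h
  · rw [abs_of_nonneg h, abs_of_nonneg (myTanhNonneg h)]
  · have hlt : Real.tanh x < 0 := by simpa using myTanhStrictMono h
    rw [abs_of_neg h, Real.tanh_neg, abs_of_neg hlt]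

lemma myAbsTanhLe (x : ℝ) : |Real.tanh x| ≤ |x| := by
  rw [myAbsTanh]; exact myTanhLeSelf (abs_nonneg x)

lemma myTanhSqLeSq (x : ℝ) : Real.tanh x ^ 2 ≤ x ^ 2 := by
  rw [← sq_abs (Real.tanh x), ← sq_abs x]
  exact pow_le_pow_left₀ (abs_nonneg _) (myAbsTanhLe x) 2

lemma myTanhSqMono {x y : ℝ} (h : |x| ≤ |y|) : Real.tanh x ^ 2 ≤ Real.tanh y ^ 2 := by
  rw [← sq_abs (Real.tanh x), ← sq_abs (Real.tanh y), myAbsTanh, myAbsTanh]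
  exact pow_le_pow_left₀ (myTanhNonneg (abs_nonneg x)) (myTanhStrictMono.monotone h) 2
open MeasureTheory ProbabilityTheory Filter Real
open scoped ENNReal NNReal

noncomputable def stdG : Measure ℝ := gaussianReal 0 1

instance : IsProbabilityMeasure stdG := by rw [stdG]; infer_instance

lemma myIntSqExp : Integrable (fun x : ℝ => x ^ 2 * Real.exp (-x ^ 2 / 2)) := by
  have h := integrable_rpow_mul_exp_neg_mul_sq (b := (1:ℝ)/2) (by norm_num) (s := 2) (by norm_num)
  convert h using 2 with x
  rw [show ((2:ℝ) : ℝ) = ((2:ℕ) : ℝ) by norm_num, Real.rpow_natCast]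
  ring_nf

lemma myIntExp : Integrable (fun x : ℝ => Real.exp (-x ^ 2 / 2)) := by
  have h := integrable_exp_neg_mul_sq (b := (1:ℝ)/2) (by norm_num)
  convert h using 2 with x
  ring_nf

lemma myIntXExp : Integrable (fun x : ℝ => x * Real.exp (-x ^ 2 / 2)) := by
  have h := integrable_rpow_mul_exp_neg_mul_sq (b := (1:ℝ)/2) (by norm_num) (s := 1) (by norm_num)
  convert h using 2 with x
  rw [show ((1:ℝ) : ℝ) = ((1:ℕ) : ℝ) by norm_num, Real.rpow_natCast]
  ring_nf

lemma myIntegralSqExp : ∫ x : ℝ, x ^ 2 * Real.exp (-x ^ 2 / 2) = Real.sqrt (2 * π) := by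
  have hu : ∀ x : ℝ, HasDerivAt (fun y : ℝ => y) (1 : ℝ) x := fun x => hasDerivAt_id x
  have hv : ∀ x : ℝ, HasDerivAt (fun y : ℝ => -Real.exp (-y ^ 2 / 2))
      (x * Real.exp (-x ^ 2 / 2)) x := by
    intro x
    have h1 : HasDerivAt (fun y : ℝ => -y ^ 2 / 2) (-x) x := by
      have := ((hasDerivAt_pow 2 x).neg.div_const 2)
      exact this.congr_deriv (by norm_num; ring)
    have := (h1.exp).neg
    exact this.congr_deriv (by ring)
  have huv' : Integrable ((fun y : ℝ => y) * fun x => x * Real.exp (-x ^ 2 / 2)) := by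
    have := myIntSqExp
    convert this using 1
    funext x; simp [Pi.mul_apply]; ring
  have hu'v : Integrable ((fun _ : ℝ => (1:ℝ)) * fun y : ℝ => -Real.exp (-y ^ 2 / 2)) := by
    have := myIntExp.neg
    convert this using 1
    funext x; simp [Pi.mul_apply]
  have huv : Integrable ((fun y : ℝ => y) * fun y : ℝ => -Real.exp (-y ^ 2 / 2)) := by
    have := myIntXExp.neg
    convert this using 1
    funext x; simp [Pi.mul_apply]
  have key := integral_mul_deriv_eq_deriv_mul_of_integrable (fun x _ => hu x) (fun x _ => hv x) huv' hu'v huv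
  have h2 : ∫ x : ℝ, x * (x * Real.exp (-x ^ 2 / 2)) = ∫ x : ℝ, x ^ 2 * Real.exp (-x ^ 2 / 2) := by
    congr 1; funext x; ring
  have h3 : ∫ x : ℝ, (1:ℝ) * -Real.exp (-x ^ 2 / 2) = -∫ x : ℝ, Real.exp (-x ^ 2 / 2) := by
    rw [← integral_neg]; congr 1; funext x; ring
  rw [h2, h3, neg_neg] at key
  rw [key]
  have h4 : ∫ x : ℝ, Real.exp (-x ^ 2 / 2) = Real.sqrt (π / (1/2)) := by
    rw [← integral_gaussian (1/2)]
    congr 1; funext x; ring_nf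
  rw [h4, show π / (1/2) = 2 * π by ring]

lemma myPdfEq (z : ℝ) :
    gaussianPDFReal 0 1 z = (Real.sqrt (2 * π))⁻¹ * Real.exp (-z ^ 2 / 2) := by
  simp [gaussianPDFReal]

lemma myDensityEq : stdG = volume.withDensity
    (fun z => (((gaussianPDFReal 0 1 z).toNNReal : ℝ≥0) : ℝ≥0∞)) := by
  rw [stdG, gaussianReal_of_var_ne_zero 0 one_ne_zero]
  rfl

lemma myIntegralEq (g : ℝ → ℝ) :
    ∫ z, g z ∂stdG = ∫ z, gaussianPDFReal 0 1 z * g z := by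
  rw [myDensityEq, integral_withDensity_eq_integral_smul
    ((measurable_gaussianPDFReal 0 1).real_toNNReal) g]
  congr 1; funext z
  rw [NNReal.smul_def, smul_eq_mul, Real.coe_toNNReal _ (gaussianPDFReal_nonneg 0 1 z)]

lemma myIntegrableIff (g : ℝ → ℝ) (hg : AEStronglyMeasurable g stdG) :
    Integrable g stdG ↔ Integrable (fun z => gaussianPDFReal 0 1 z * g z) := by
  rw [myDensityEq] at hg ⊢
  rw [integrable_withDensity_iff_integrable_smul ((measurable_gaussianPDFReal 0 1).real_toNNReal)]
  constructor <;> intro h <;> [skip; skip] <;>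
  · refine h.congr ?_
    filter_upwards with z
    rw [NNReal.smul_def, smul_eq_mul, Real.coe_toNNReal _ (gaussianPDFReal_nonneg 0 1 z)]

lemma mySqIntegrable : Integrable (fun z : ℝ => z ^ 2) stdG := by
  rw [myIntegrableIff _ (by fun_prop)]
  have : (fun z : ℝ => gaussianPDFReal 0 1 z * z ^ 2)
      = fun z => (Real.sqrt (2 * π))⁻¹ * (z ^ 2 * Real.exp (-z ^ 2 / 2)) := by
    funext z; rw [myPdfEq]; ring
  rw [this]
  exact myIntSqExp.const_mul _

lemma mySecondMoment : ∫ z, z ^ 2 ∂stdG = 1 := by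
  rw [myIntegralEq]
  have : (fun z : ℝ => gaussianPDFReal 0 1 z * z ^ 2)
      = fun z => (Real.sqrt (2 * π))⁻¹ * (z ^ 2 * Real.exp (-z ^ 2 / 2)) := by
    funext z; rw [myPdfEq]; ring
  rw [this, integral_const_mul, myIntegralSqExp, inv_mul_cancel₀]
  positivity

lemma myTanhSqIntegrable (a : ℝ) : Integrable (fun z => Real.tanh (z * a) ^ 2) stdG := by
  refine (integrable_const (1:ℝ)).mono' ?_ ?_
  · exact ((myContinuousTanh.comp (continuous_id.mul continuous_const)).pow 2).aestronglyMeasurable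
  · filter_upwards with z
    rw [Real.norm_eq_abs, abs_of_nonneg (sq_nonneg _)]
    exact (myTanhSqLtOne _).le

lemma myTanhSqIntegralLtOne (a : ℝ) : ∫ z, Real.tanh (z * a) ^ 2 ∂stdG < 1 := by
  have hkey : 0 < ∫ z, (1 - Real.tanh (z * a) ^ 2) ∂stdG := by
    rw [integral_pos_iff_support_of_nonneg]
    · have hsupp : Function.support (fun z => 1 - Real.tanh (z * a) ^ 2) = Set.univ := by
        ext z
        simp only [Function.mem_support, Set.mem_univ, iff_true]
        exact sub_ne_zero.2 (myTanhSqLtOne (z * a)).ne'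
      rw [hsupp, measure_univ]
      norm_num
    · exact fun z => sub_nonneg.2 (myTanhSqLtOne (z * a)).le
    · exact (integrable_const 1).sub (myTanhSqIntegrable a)
  rw [integral_sub (integrable_const 1) (myTanhSqIntegrable a), integral_const] at hkey
  rw [probReal_univ] at hkey
  simp only [ENNReal.toReal_one, one_smul] at hkey
  linarith

lemma myDerivIntegrand (c z : ℝ) {q : ℝ} (hc : 0 < c) (hq : 0 < q) :
    HasDerivAt (fun q => Real.tanh (z * Real.sqrt (c * q)) ^ 2)
      (2 * Real.tanh (z * Real.sqrt (c * q)) * (1 - Real.tanh (z * Real.sqrt (c * q)) ^ 2) *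
        (z * (c / (2 * Real.sqrt (c * q))))) q := by
  have h0 : c * q ≠ 0 := (mul_pos hc hq).ne'
  have h1 : HasDerivAt (fun q : ℝ => c * q) c q := by
    simpa using (hasDerivAt_id q).const_mul c
  have h2 := (Real.hasDerivAt_sqrt h0).comp q h1
  have h3 := h2.const_mul z
  have h4 := (myHasDerivAtTanh (z * Real.sqrt (c * q))).comp q h3
  have h5 := h4.pow 2
  exact h5.congr_deriv (by simp only [Function.comp_apply]; norm_num; ring)

theorem sk_self_consistency_map_props (β : ℝ) (f : ℝ → ℝ)
    (hf : f = fun q => ∫ z, (Real.tanh (z * Real.sqrt (β ^ 2 * q))) ^ 2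
        ∂(gaussianReal 0 1)) :
    ContinuousOn f (Set.Icc 0 1) ∧ MonotoneOn f (Set.Icc 0 1) ∧
      (∀ q ∈ Set.Icc (0:ℝ) 1, f q ∈ Set.Ico (0:ℝ) 1) ∧ f 0 = 0 ∧
      (∀ q ∈ Set.Ioc (0:ℝ) 1, DifferentiableAt ℝ f q) ∧
      Tendsto (fun q => f q / q) (nhdsWithin 0 (Set.Ioi 0)) (nhds (β ^ 2)) := by
  have hμ : gaussianReal 0 1 = stdG := rfl
  rw [hμ] at hf
  subst hf
  set c : ℝ := β ^ 2 with hcdef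
  by_cases hβ : β = 0
  · -- trivial case
    subst hβ
    have hf0 : (fun q => ∫ z, Real.tanh (z * Real.sqrt ((0:ℝ) ^ 2 * q)) ^ 2 ∂stdG)
        = fun _ : ℝ => (0:ℝ) := by
      funext q; simp
    rw [hf0]
    refine ⟨continuous_const.continuousOn, monotoneOn_const, ?_, rfl, ?_, ?_⟩
    · intro q _; exact ⟨le_refl 0, one_pos⟩
    · intro q _; exact differentiableAt_const 0
    · rw [show c = 0 by rw [hcdef]; norm_num]
      exact tendsto_const_nhds.congr fun q => by simp
  have hc : 0 < c := by positivity
  have ht : ∀ a : ℝ, Continuous fun z : ℝ => Real.tanh (z * a) :=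
    fun a => myContinuousTanh.comp (continuous_id.mul continuous_const)
  constructor
  · -- continuity
    apply Continuous.continuousOn
    apply continuous_of_dominated (bound := fun _ => (1:ℝ))
    · intro q
      exact ((ht _).pow 2).aestronglyMeasurable
    · intro q
      filter_upwards with z
      rw [Real.norm_eq_abs, abs_of_nonneg (sq_nonneg _)]
      exact (myTanhSqLtOne _).le
    · exact integrable_const 1
    · filter_upwards with z
      exact (myContinuousTanh.comp (continuous_const.mul
        (Real.continuous_sqrt.comp (continuous_const.mul continuous_id)))).pow 2
  constructor
  · -- monotone
    intro q hq q' hq' hle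
    apply integral_mono (myTanhSqIntegrable _) (myTanhSqIntegrable _)
    intro z
    apply myTanhSqMono
    rw [abs_mul, abs_mul, abs_of_nonneg (Real.sqrt_nonneg _), abs_of_nonneg (Real.sqrt_nonneg _)]
    exact mul_le_mul_of_nonneg_left
      (Real.sqrt_le_sqrt (mul_le_mul_of_nonneg_left hle (sq_nonneg β))) (abs_nonneg z)
  constructor
  · -- range
    intro q _
    exact ⟨integral_nonneg (fun z => sq_nonneg _), myTanhSqIntegralLtOne _⟩
  constructor
  · -- value at 0
    simp
  constructor
  · -- differentiability
    intro q₀ hq₀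
    have hq₀pos : 0 < q₀ := hq₀.1
    have hmeas : AEStronglyMeasurable
        (fun z => 2 * Real.tanh (z * Real.sqrt (c * q₀)) *
          (1 - Real.tanh (z * Real.sqrt (c * q₀)) ^ 2) *
          (z * (c / (2 * Real.sqrt (c * q₀))))) stdG := by
      exact (((continuous_const.mul (ht _)).mul
        (continuous_const.sub ((ht _).pow 2))).mul
        (continuous_id.mul continuous_const)).aestronglyMeasurable
    have key := hasDerivAt_integral_of_dominated_loc_of_deriv_le (𝕜 := ℝ)
      (μ := stdG) (x₀ := q₀) (s := Metric.ball q₀ (q₀ / 2))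
      (F := fun q z => Real.tanh (z * Real.sqrt (c * q)) ^ 2)
      (F' := fun q z => 2 * Real.tanh (z * Real.sqrt (c * q)) *
        (1 - Real.tanh (z * Real.sqrt (c * q)) ^ 2) *
        (z * (c / (2 * Real.sqrt (c * q)))))
      (bound := fun z => c * z ^ 2)
      (Metric.ball_mem_nhds _ (by positivity))
      (Eventually.of_forall fun q => ((ht _).pow 2).aestronglyMeasurable)
      (myTanhSqIntegrable _)
      hmeas
      ?_ (mySqIntegrable.const_mul c) ?_
    · exact key.2.differentiableAt
    · -- bound
      filter_upwards with z
      intro q hq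
      have hqpos : 0 < q := by
        have := abs_lt.1 (by simpa [Real.dist_eq] using Metric.mem_ball.1 hq)
        linarith
      have hs : 0 < Real.sqrt (c * q) := Real.sqrt_pos.2 (mul_pos hc hqpos)
      set s := Real.sqrt (c * q)
      set t := Real.tanh (z * s) with htdef
      have h1 : |t| ≤ |z| * s := by
        refine le_trans (myAbsTanhLe _) ?_
        rw [abs_mul, abs_of_nonneg hs.le]
      have h2 : |1 - t ^ 2| ≤ 1 := by
        rw [abs_of_nonneg (by nlinarith [myTanhSqLtOne (z * s)] : (0:ℝ) ≤ 1 - t ^ 2)]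
        nlinarith [sq_nonneg t]
      have heq : 2 * (|z| * s) * 1 * (|z| * (c / (2 * s))) = c * z ^ 2 := by
        have hs' : s ≠ 0 := hs.ne'
        have habs : |z| * |z| = z ^ 2 := by rw [← abs_mul, abs_mul_self, sq]
        field_simp
        linear_combination habs
      calc ‖2 * t * (1 - t ^ 2) * (z * (c / (2 * s)))‖
          = 2 * |t| * |1 - t ^ 2| * (|z| * (c / (2 * s))) := by
            rw [Real.norm_eq_abs, abs_mul, abs_mul, abs_mul, abs_mul,
              abs_of_pos (show (0:ℝ) < c / (2 * s) by positivity), abs_two]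
        _ ≤ 2 * (|z| * s) * 1 * (|z| * (c / (2 * s))) := by gcongr
        _ = c * z ^ 2 := heq
    · -- derivative a.e.
      filter_upwards with z
      intro q hq
      have hqpos : 0 < q := by
        have := abs_lt.1 (by simpa [Real.dist_eq] using Metric.mem_ball.1 hq)
        linarith
      exact myDerivIntegrand c z hc hqpos
  · -- limit at 0+
    have hslope : Tendsto (fun u => Real.tanh u / u) (nhdsWithin 0 {(0:ℝ)}ᶜ) (nhds 1) := by
      have h := (myHasDerivAtTanh 0)
      rw [hasDerivAt_iff_tendsto_slope] at h
      simp only [Real.tanh_zero, sq, mul_zero, sub_zero] at h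
      refine h.congr fun u => ?_
      simp [slope_def_field, div_eq_inv_mul]
    have hpt : ∀ z : ℝ, Tendsto (fun q => Real.tanh (z * Real.sqrt (c * q)) ^ 2 / q)
        (nhdsWithin 0 (Set.Ioi 0)) (nhds (c * z ^ 2)) := by
      intro z
      by_cases hz : z = 0
      · subst hz
        have h0 : c * (0:ℝ) ^ 2 = 0 := by ring
        rw [h0]
        have hfun : (fun q : ℝ => Real.tanh ((0:ℝ) * Real.sqrt (c * q)) ^ 2 / q)
            = fun _ : ℝ => (0:ℝ) := by
          funext q; simp
        rw [hfun]
        exact tendsto_const_nhds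
      · have hφ : Tendsto (fun q => z * Real.sqrt (c * q)) (nhdsWithin 0 (Set.Ioi 0))
            (nhdsWithin 0 {(0:ℝ)}ᶜ) := by
          apply tendsto_nhdsWithin_of_tendsto_nhds_of_eventually_within
          · have hcont : Continuous fun q : ℝ => z * Real.sqrt (c * q) :=
              continuous_const.mul (Real.continuous_sqrt.comp (continuous_const.mul continuous_id))
            have h := (hcont.tendsto 0).mono_left
              (nhdsWithin_le_nhds (s := Set.Ioi (0:ℝ)))
            simpa using h
          · filter_upwards [self_mem_nhdsWithin] with q hq
            exact mul_ne_zero hz (Real.sqrt_pos.2 (mul_pos hc hq)).ne'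
        have h1 : Tendsto (fun q =>
            (Real.tanh (z * Real.sqrt (c * q)) / (z * Real.sqrt (c * q))) ^ 2 * (c * z ^ 2))
            (nhdsWithin 0 (Set.Ioi 0)) (nhds ((1:ℝ) ^ 2 * (c * z ^ 2))) :=
          ((hslope.comp hφ).pow 2).mul_const _
        rw [one_pow, one_mul] at h1
        refine h1.congr' ?_
        filter_upwards [self_mem_nhdsWithin] with q hq
        have hu2 : (z * Real.sqrt (c * q)) ^ 2 = z ^ 2 * (c * q) := by
          rw [mul_pow, Real.sq_sqrt (mul_pos hc hq).le]
        have hune : (z * Real.sqrt (c * q)) ≠ 0 :=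
          mul_ne_zero hz (Real.sqrt_pos.2 (mul_pos hc hq)).ne'
        rw [div_pow, hu2, div_mul_eq_mul_div,
          show z ^ 2 * (c * q) = c * z ^ 2 * q by ring,
          mul_comm (Real.tanh (z * Real.sqrt (c * q)) ^ 2) (c * z ^ 2),
          mul_div_mul_left _ _ (mul_ne_zero hc.ne' (pow_ne_zero 2 hz))]
    have hDCT := tendsto_integral_filter_of_dominated_convergence (μ := stdG)
      (F := fun q z => Real.tanh (z * Real.sqrt (c * q)) ^ 2 / q)
      (f := fun z => c * z ^ 2)
      (bound := fun z => c * z ^ 2)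
      (Eventually.of_forall fun q => (((ht _).pow 2).div_const q).aestronglyMeasurable)
      ?_ (mySqIntegrable.const_mul c) (Eventually.of_forall hpt)
    · have hint : ∫ z, c * z ^ 2 ∂stdG = c := by
        rw [integral_const_mul, mySecondMoment, mul_one]
      rw [hint] at hDCT
      refine hDCT.congr' ?_
      filter_upwards [self_mem_nhdsWithin] with q hq
      rw [integral_div]
    · filter_upwards [self_mem_nhdsWithin] with q hq
      filter_upwards with z
      have hqpos : (0:ℝ) < q := hq
      rw [Real.norm_eq_abs, abs_of_nonneg (div_nonneg (sq_nonneg _) hqpos.le),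
        div_le_iff₀ hqpos]
      refine le_trans (myTanhSqLeSq _) ?_
      rw [mul_pow, Real.sq_sqrt (mul_pos hc hqpos).le]
      exact le_of_eq (by ring)
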